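/- In the setting of Construction 1 with n > 2k, let A, B ⊆ {1, ..., n} with |A| ≤ k and |B| = 2k - |A|. Then the 2k × 2k matrix P = [[G_0|_A, G_1|_B], [0, G_0|_B]] is invertible, where G_0|_A denotes the k×|A| submatrix of G_0 consisting of the columns indexed by A, and similarly for G_1|_B and G_0|_B. (Equivalently, the first truncated matrix G_1^c = [[G_0, G_1], [0, G_0]] has the property that every 2k × 2k full-size minor formed by columns 1 ≤ t_1 < ... < t_{2k} ≤ 2n with t_{k+1} ≥ n+1 is nonzero.) -/

import Mathlib

open Polynomial Matrix

/-- `N_0(a) = 1`, `N_{i+1}(a) = N_i(a)^q · a`. -/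
def skewN (q : ℕ) {F : Type*} [Field F] : ℕ → F → F
  | 0, _ => 1
  | i + 1, a => (skewN q i a) ^ q * a

/-- `α = Σ_{j=0}^{k-1} λ^j b_j` (coordinates `(1, λ, …, λ^{k-1}, 0, …, 0)` in the basis `b`). -/
def alph (k : ℕ) {F : Type*} [Field F] (lam : F) (b : Fin (2 * k) → F) : F :=
  ∑ j : Fin k, lam ^ (j : ℕ) * b (Fin.castLE (by omega) j)

/-- `β = Σ_{j=0}^{2k-1} λ^j b_j` (coordinates `(1, λ, …, λ^{2k-1})` in the basis `b`). -/
def bet (k : ℕ) {F : Type*} [Field F] (lam : F) (b : Fin (2 * k) → F) : F :=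
  ∑ j : Fin (2 * k), lam ^ (j : ℕ) * b j

/-- `(G_0)_{r,i} = N_r(α_i^{q-1}) α_i = N_r(^{α_i} 1) α_i`. -/
def G0mat (q k n : ℕ) {F : Type*} [Field F] (lam : Fin n → F) (b : Fin (2 * k) → F) :
    Matrix (Fin k) (Fin n) F :=
  Matrix.of fun r i => skewN q (r : ℕ) ((alph k (lam i) b) ^ (q - 1)) * alph k (lam i) b

/-- `(G_1)_{r,i} = N_r(β_i^{q-1} γ) β_i = N_r(^{β_i} γ) β_i`. -/
def G1mat (q k n : ℕ) {F : Type*} [Field F] (γ : F) (lam : Fin n → F)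
    (b : Fin (2 * k) → F) : Matrix (Fin k) (Fin n) F :=
  Matrix.of fun r i => skewN q (r : ℕ) ((bet k (lam i) b) ^ (q - 1) * γ) * bet k (lam i) b

/-- The generator matrix `G(D) = G_0 + G_1 D` of Construction 1. -/
noncomputable def GpolyMat (q k n : ℕ) {F : Type*} [Field F] (γ : F) (lam : Fin n → F)
    (b : Fin (2 * k) → F) : Matrix (Fin k) (Fin n) (Polynomial F) :=
  Matrix.of fun r i =>
    Polynomial.C (G0mat q k n lam b r i) + Polynomial.C (G1mat q k n γ lam b r i) * Polynomial.X

section SkewLemmas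
variable {F : Type*} [Field F] (q : ℕ)

lemma skewN_zero (a : F) : skewN q 0 a = 1 := rfl
lemma skewN_succ (r : ℕ) (a : F) : skewN q (r+1) a = (skewN q r a)^q * a := rfl

lemma skewN_one (r : ℕ) : skewN q r (1:F) = 1 := by
  induction r with
  | zero => rfl
  | succ r ih => simp [skewN_succ, ih]

lemma skewN_ne_zero (r : ℕ) {a : F} (ha : a ≠ 0) : skewN q r a ≠ 0 := by
  induction r with
  | zero => exact one_ne_zero
  | succ r ih => exact mul_ne_zero (pow_ne_zero _ ih) ha

lemma skewN_succ' (r : ℕ) (a : F) : skewN q (r+1) a = a ^ (q^r) * skewN q r a := by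
  induction r with
  | zero => simp [skewN_succ, skewN_zero]
  | succ r ih =>
    rw [skewN_succ q (r+1), ih, mul_pow, ← pow_mul, ← pow_succ, mul_assoc, ← skewN_succ, ih]

lemma skewN_conj (hq1 : 1 ≤ q) (r : ℕ) (x γ' : F) :
    skewN q r (x^(q-1) * γ') * x = skewN q r γ' * x^(q^r) := by
  induction r with
  | zero => simp [skewN_zero]
  | succ r ih =>
    have hx : x^(q-1) * x = x^q := by
      rw [← pow_succ, Nat.sub_add_cancel hq1]
    calc skewN q (r+1) (x^(q-1) * γ') * x
        = (skewN q r (x^(q-1)*γ') * x)^q * γ' := by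
          rw [skewN_succ, mul_pow]
          linear_combination (skewN q r (x^(q-1)*γ'))^q * γ' * hx
      _ = (skewN q r γ' * x^(q^r))^q * γ' := by rw [ih]
      _ = skewN q (r+1) γ' * x^(q^(r+1)) := by
          rw [skewN_succ, mul_pow, ← pow_mul, ← pow_succ]
          ring

lemma geom_aux (hq1 : 1 ≤ q) : ∀ m : ℕ, (q-1) * (∑ t ∈ Finset.range m, q^t) + 1 = q^m := by
  intro m
  induction m with
  | zero => simp
  | succ m ih =>
    rw [Finset.sum_range_succ, Nat.mul_add, pow_succ]
    have : 1 ≤ q^m := Nat.one_le_pow _ _ hq1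
    nlinarith [Nat.sub_add_cancel hq1]

end SkewLemmas
open Polynomial

section CharStuff
variable {F : Type*} [Field F] [Fintype F]

lemma frob_add_base {q m : ℕ} (hq : IsPrimePow q) (hm : 0 < m)
    (hF : Fintype.card F = q ^ m) : ∀ a b : F, (a + b) ^ q = a ^ q + b ^ q := by
  obtain ⟨p, s, hp, hs, rfl⟩ := hq
  have hp' : p.Prime := Nat.prime_iff.2 hp
  haveI : Fact p.Prime := ⟨hp'⟩
  have hcast : ((p : ℕ) : F) ^ (s * m) = 0 := by
    have := FiniteField.cast_card_eq_zero F
    rw [hF, ← pow_mul] at this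
    push_cast
    exact_mod_cast this
  have hsm : s * m ≠ 0 := by positivity
  have hp0 : ((p : ℕ) : F) = 0 := pow_eq_zero_iff hsm |>.1 hcast
  haveI : CharP F p := by
    have hr := CharP.cast_eq_zero_iff F (ringChar F) p |>.1 ?_
    · have hrp : ringChar F = p := ((Nat.prime_dvd_prime_iff_eq
        (CharP.char_is_prime F (ringChar F)) hp').1 hr)
      rw [← hrp]; infer_instance
    · rw [hp0]
  intro a b
  simpa using add_pow_char_pow (R := F) (p := p) (n := s) (x := a) (y := b)

omit [Fintype F] in
lemma frob_add_iter {q : ℕ} (hadd : ∀ a b : F, (a + b) ^ q = a ^ q + b ^ q) :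
    ∀ (n : ℕ) (a b : F), (a + b) ^ q ^ n = a ^ q ^ n + b ^ q ^ n := by
  intro n
  induction n with
  | zero => simp
  | succ n ih => intro a b; rw [pow_succ, pow_mul, pow_mul, pow_mul, ih, hadd]

omit [Fintype F] in
lemma frob_sub_iter {q : ℕ} (hq1 : 1 ≤ q) (hadd : ∀ a b : F, (a + b) ^ q = a ^ q + b ^ q) :
    ∀ (n : ℕ) (a b : F), (a - b) ^ q ^ n = a ^ q ^ n - b ^ q ^ n := by
  have hneg : ∀ (n : ℕ) (a : F), (-a) ^ q ^ n = -(a ^ q ^ n) := by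
    intro n a
    have h0 : (a + -a) ^ q ^ n = a ^ q ^ n + (-a) ^ q ^ n := frob_add_iter hadd n a (-a)
    rw [add_neg_cancel, zero_pow (by positivity : (0:ℕ) < q ^ n).ne'] at h0
    linear_combination -h0
  intro n a b
  rw [sub_eq_add_neg, frob_add_iter hadd n, hneg, sub_eq_add_neg]

end CharStuff

section Kfix
variable {F : Type*} [Field F] (q : ℕ)

def Kfix (hq1 : 1 ≤ q) (hadd : ∀ a b : F, (a + b) ^ q = a ^ q + b ^ q) : Subfield F where
  carrier := {x | x ^ q = x}
  mul_mem' := by intro a b ha hb; simp only [Set.mem_setOf_eq] at *; rw [mul_pow, ha, hb]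
  one_mem' := one_pow q
  add_mem' := by intro a b ha hb; simp only [Set.mem_setOf_eq] at *; rw [hadd, ha, hb]
  zero_mem' := zero_pow (by omega)
  neg_mem' := by
    intro a ha
    simp only [Set.mem_setOf_eq] at *
    have h0 : (a + -a) ^ q = a ^ q + (-a) ^ q := hadd a (-a)
    rw [add_neg_cancel, zero_pow (by omega : q ≠ 0), ha] at h0
    linear_combination -h0
  inv_mem' := by intro a ha; simp only [Set.mem_setOf_eq] at *; rw [inv_pow, ha]

variable {q : ℕ} (hq1 : 1 ≤ q) (hadd : ∀ a b : F, (a + b) ^ q = a ^ q + b ^ q)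

lemma mem_Kfix {x : F} : x ∈ Kfix q hq1 hadd ↔ x ^ q = x := Iff.rfl

lemma Kfix_pow_pow {x : F} (hx : x ∈ Kfix q hq1 hadd) (n : ℕ) : x ^ q ^ n = x := by
  induction n with
  | zero => simp
  | succ n ih => rw [pow_succ, pow_mul, ih, hx]

end Kfix

section Llin
variable {F : Type*} [Field F] {q : ℕ} (hq1 : 1 ≤ q)
  (hadd : ∀ a b : F, (a + b) ^ q = a ^ q + b ^ q)

/-- The `Kfix`-linear map `x ↦ ∑_{r ≤ m} c_r N_r(γ') x^{q^r}`. -/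
def Llin (γ' : F) (c : ℕ → F) (m : ℕ) : F →ₗ[Kfix q hq1 hadd] F where
  toFun x := ∑ r ∈ Finset.range (m+1), c r * skewN q r γ' * x ^ q ^ r
  map_add' x y := by
    rw [← Finset.sum_add_distrib]
    refine Finset.sum_congr rfl fun r _ => ?_
    rw [frob_add_iter hadd r x y, mul_add]
  map_smul' t x := by
    simp only [RingHom.id_apply, Finset.smul_sum]
    refine Finset.sum_congr rfl fun r _ => ?_
    have ht : ((t : F)) ^ q ^ r = (t : F) := Kfix_pow_pow hq1 hadd t.2 r
    have : ∀ y : F, t • y = (t : F) * y := fun y => rfl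
    rw [this, this, mul_pow, ht]
    ring

lemma Llin_apply (γ' : F) (c : ℕ → F) (m : ℕ) (x : F) :
    Llin hq1 hadd γ' c m x = ∑ r ∈ Finset.range (m+1), c r * skewN q r γ' * x ^ q ^ r := rfl

end Llin

section Counting
variable {F : Type*} [Field F] [Fintype F] {q : ℕ} (hq1 : 1 ≤ q)
  (hadd : ∀ a b : F, (a + b) ^ q = a ^ q + b ^ q)

lemma finrank_ker_Llin_le (hq2 : 2 ≤ q)
    (hcard : q ≤ Nat.card (Kfix q hq1 hadd))
    {γ' : F} (hγ' : γ' ≠ 0) (c : ℕ → F) (m : ℕ) (hc : c m ≠ 0) :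
    Module.finrank (Kfix q hq1 hadd) (LinearMap.ker (Llin hq1 hadd γ' c m)) ≤ m := by
  classical
  set K := Kfix q hq1 hadd
  letI : Fintype K := Fintype.ofFinite K
  set L := Llin hq1 hadd γ' c m
  set W := LinearMap.ker L
  letI : Fintype W := Fintype.ofFinite W
  -- the associated ordinary polynomial
  set P : F[X] := ∑ r ∈ Finset.range (m+1), Polynomial.monomial (q ^ r) (c r * skewN q r γ')
    with hP
  have hinj : Function.Injective (q ^ ·) := Nat.pow_right_injective hq2
  have hcoeff : P.coeff (q ^ m) = c m * skewN q m γ' := by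
    rw [hP, Polynomial.finset_sum_coeff]
    rw [Finset.sum_eq_single m]
    · simp [Polynomial.coeff_monomial]
    · intro r hr hrm
      rw [Polynomial.coeff_monomial, if_neg (fun h => hrm (hinj h))]
    · intro h
      exact absurd (Finset.self_mem_range_succ m) h
  have hPne : P ≠ 0 := fun h => by
    rw [h, Polynomial.coeff_zero] at hcoeff
    exact (mul_ne_zero hc (skewN_ne_zero q m hγ')) hcoeff.symm
  have hdeg : P.natDegree ≤ q ^ m := by
    refine Polynomial.natDegree_sum_le_of_forall_le _ _ fun r hr => ?_
    refine (Polynomial.natDegree_monomial_le _).trans ?_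
    exact Nat.pow_le_pow_right (by omega) (Nat.lt_succ_iff.1 (Finset.mem_range.1 hr))
  have heval : ∀ x : F, P.eval x = L x := by
    intro x
    rw [hP, Polynomial.eval_finset_sum, Llin_apply]
    refine Finset.sum_congr rfl fun r _ => ?_
    rw [Polynomial.eval_monomial]
  -- kernel elements are roots
  have hsub : (W : Set F).toFinset ⊆ P.roots.toFinset := by
    intro x hx
    rw [Set.mem_toFinset] at hx
    rw [Multiset.mem_toFinset, Polynomial.mem_roots hPne]
    rw [Polynomial.IsRoot, heval x]; exact hx
  have hcard1 : Fintype.card W ≤ q ^ m := by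
    have h1 : (W : Set F).toFinset.card ≤ P.roots.toFinset.card := Finset.card_le_card hsub
    have h2 : P.roots.toFinset.card ≤ P.roots.card := Multiset.toFinset_card_le _
    have h3 : P.roots.card ≤ P.natDegree := Polynomial.card_roots' P
    have h4 : (W : Set F).toFinset.card = Fintype.card W := Set.toFinset_card _
    omega
  have hcard2 : Fintype.card W = Fintype.card K ^ Module.finrank K W :=
    Module.card_eq_pow_finrank (K := K) (V := W)
  have hq' : q ≤ Fintype.card K := by rwa [← Nat.card_eq_fintype_card]
  have : q ^ Module.finrank K W ≤ q ^ m := by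
    calc q ^ Module.finrank K W ≤ Fintype.card K ^ Module.finrank K W :=
          Nat.pow_le_pow_left hq' _
      _ = Fintype.card W := hcard2.symm
      _ ≤ q ^ m := hcard1
  exact (Nat.pow_le_pow_iff_right (by omega)).1 this

end Counting

section Division
variable {F : Type*} [Field F] (q : ℕ)

def divCoeAux (c : ℕ → F) (ρ : F) (m : ℕ) : ℕ → F
  | 0 => c m
  | i + 1 => c (m - 1 - i) + divCoeAux c ρ m i * ρ ^ q ^ (m - 1 - i)

def divCoe (c : ℕ → F) (ρ : F) (m : ℕ) (j : ℕ) : F :=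
  if j < m then divCoeAux q c ρ m (m - 1 - j) else 0

lemma divCoe_of_ge (c : ℕ → F) (ρ : F) {m j : ℕ} (h : m ≤ j) : divCoe q c ρ m j = 0 :=
  if_neg (by omega)

lemma divCoe_rec (c : ℕ → F) (ρ : F) (m j : ℕ) (hj : j < m) :
    divCoe q c ρ m j = c (j+1) + divCoe q c ρ m (j+1) * ρ ^ q ^ (j+1) := by
  rcases eq_or_lt_of_le (Nat.succ_le_of_lt hj) with h | h
  · rw [divCoe, if_pos hj, divCoe, if_neg (by omega)]
    have h0 : m - 1 - j = 0 := by omega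
    rw [h0]
    show c m = c (j+1) + 0 * _
    rw [← h]
    ring
  · rw [divCoe, if_pos hj, divCoe, if_pos h]
    have h1 : m - 1 - j = (m - 1 - (j+1)) + 1 := by omega
    rw [h1]
    show c (m - 1 - (m-1-(j+1))) + divCoeAux q c ρ m (m-1-(j+1)) * ρ ^ (q ^ (m-1-(m-1-(j+1)))) = _
    have h2 : m - 1 - (m - 1 - (j+1)) = j + 1 := by omega
    rw [h2]

lemma divCoe_top (c : ℕ → F) (ρ : F) (m : ℕ) (hm : 1 ≤ m) :
    divCoe q c ρ m (m-1) = c m := by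
  have := divCoe_rec q c ρ m (m-1) (by omega)
  rw [show m - 1 + 1 = m from by omega] at this
  rw [this, divCoe_of_ge q c ρ (le_refl m)]
  ring

lemma div_rem (c : ℕ → F) (ρ : F) (m : ℕ) (hm : 1 ≤ m)
    (hE : ∑ r ∈ Finset.range (m+1), c r * skewN q r ρ = 0) :
    c 0 + divCoe q c ρ m 0 * ρ = 0 := by
  set c' := divCoe q c ρ m with hc'
  set t : ℕ → F := fun j => c' j * skewN q (j+1) ρ with ht
  have hterm : ∀ j ∈ Finset.range m, c (j+1) * skewN q (j+1) ρ = t j - t (j+1) := by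
    intro j hj
    have hrec := divCoe_rec q c ρ m j (Finset.mem_range.1 hj)
    rw [← hc'] at hrec
    have hsk : ρ ^ q ^ (j+1) * skewN q (j+1) ρ = skewN q (j+2) ρ := (skewN_succ' q (j+1) ρ).symm
    simp only [ht]
    linear_combination (-(skewN q (j+1) ρ)) * hrec - c' (j+1) * hsk
  have h1 : ∑ r ∈ Finset.range (m+1), c r * skewN q r ρ
      = (∑ j ∈ Finset.range m, (t j - t (j+1))) + c 0 := by
    rw [Finset.sum_range_succ']
    congr 1
    · exact Finset.sum_congr rfl hterm
    · simp [skewN_zero]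
  rw [h1, Finset.sum_range_sub' t m] at hE
  have htm : t m = 0 := by
    simp only [ht, hc', divCoe_of_ge q c ρ (le_refl m), zero_mul]
  have ht0 : t 0 = c' 0 * ρ := by
    simp only [ht, skewN_succ, skewN_zero, one_pow, one_mul]
  rw [htm, ht0] at hE
  linear_combination hE

end Division

section Tlin
variable {F : Type*} [Field F] {q : ℕ} (hq1 : 1 ≤ q)
  (hadd : ∀ a b : F, (a + b) ^ q = a ^ q + b ^ q)

def Tlin (γ' ρ : F) : F →ₗ[Kfix q hq1 hadd] F where
  toFun x := γ' * x ^ q - ρ * x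
  map_add' x y := by
    show γ' * (x + y) ^ q - ρ * (x + y) = _
    rw [hadd]; ring
  map_smul' t x := by
    have ht : ((t : F)) ^ q = (t : F) := t.2
    have hs : ∀ y : F, t • y = (t : F) * y := fun y => rfl
    simp only [RingHom.id_apply, hs, mul_pow, ht]
    ring

lemma div_comp (γ' : F) (c : ℕ → F) (ρ : F) (m : ℕ) (hm : 1 ≤ m)
    (hrem : c 0 + divCoe q c ρ m 0 * ρ = 0) (x : F) :
    Llin hq1 hadd γ' c m x
      = Llin hq1 hadd γ' (divCoe q c ρ m) (m-1) (Tlin hq1 hadd γ' ρ x) := by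
  set c' := divCoe q c ρ m with hc'
  set u : ℕ → F := fun j => c' j * skewN q (j+1) γ' * x ^ q ^ (j+1) with hu
  set w : ℕ → F := fun j => c' j * ρ ^ q ^ j * skewN q j γ' * x ^ q ^ j with hw
  have hm' : m - 1 + 1 = m := by omega
  have hRHS : Llin hq1 hadd γ' c' (m-1) (Tlin hq1 hadd γ' ρ x)
      = ∑ j ∈ Finset.range m, (u j - w j) := by
    rw [Llin_apply, hm']
    refine Finset.sum_congr rfl fun j hj => ?_
    have hTx : Tlin hq1 hadd γ' ρ x = γ' * x ^ q - ρ * x := rfl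
    have hsub : (γ' * x ^ q - ρ * x) ^ q ^ j
        = γ' ^ q ^ j * x ^ q ^ (j+1) - ρ ^ q ^ j * x ^ q ^ j := by
      rw [frob_sub_iter hq1 hadd j, mul_pow, mul_pow, ← pow_mul, ← pow_succ']
    rw [hTx, hsub]
    have hsk : skewN q j γ' * γ' ^ q ^ j = skewN q (j+1) γ' := by
      rw [skewN_succ']; ring
    simp only [hu, hw]
    linear_combination (c' j * x ^ q ^ (j+1)) * hsk
  have hLHS : Llin hq1 hadd γ' c m x = c 0 * x + ∑ j ∈ Finset.range m, (u j - w (j+1)) := by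
    rw [Llin_apply, Finset.sum_range_succ']
    rw [add_comm]
    congr 1
    · simp [skewN_zero]
    · refine Finset.sum_congr rfl fun j hj => ?_
      have hrec := divCoe_rec q c ρ m j (Finset.mem_range.1 hj)
      rw [← hc'] at hrec
      simp only [hu, hw]
      linear_combination (-(skewN q (j+1) γ' * x ^ q ^ (j+1))) * hrec
  rw [hLHS, hRHS]
  have hsplit : ∑ j ∈ Finset.range m, (u j - w (j+1))
      = ∑ j ∈ Finset.range m, (u j - w j) + (w 0 - w m) := by
    rw [← Finset.sum_range_sub' w m, ← Finset.sum_add_distrib]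
    exact Finset.sum_congr rfl fun j _ => by ring
  rw [hsplit]
  have hwm : w m = 0 := by
    simp only [hw, hc', divCoe_of_ge q c ρ (le_refl m), zero_mul]
  have hw0 : w 0 = divCoe q c ρ m 0 * ρ * x := by
    simp only [hw, hc', pow_zero, pow_one, skewN_zero, mul_one]
  rw [hwm, hw0]
  linear_combination x * hrem

end Tlin

section KerComp
variable {K V : Type*} [Field K] [AddCommGroup V] [Module K V] [FiniteDimensional K V]

open Module LinearMap

lemma finrank_ker_comp_le (f g : V →ₗ[K] V) :
    finrank K (LinearMap.ker (g ∘ₗ f))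
      ≤ finrank K (LinearMap.ker g) + finrank K (LinearMap.ker f) := by
  set W := LinearMap.ker (g ∘ₗ f)
  set ψ := f.domRestrict W with hψ
  have h1 : finrank K (LinearMap.range ψ) + finrank K (LinearMap.ker ψ) = finrank K W :=
    finrank_range_add_finrank_ker ψ
  have h2 : LinearMap.range ψ ≤ LinearMap.ker g := by
    rintro _ ⟨⟨x, hx⟩, rfl⟩
    exact hx
  have h3 : finrank K (LinearMap.range ψ) ≤ finrank K (LinearMap.ker g) :=
    Submodule.finrank_mono h2
  have h4 : finrank K (LinearMap.ker ψ) ≤ finrank K (LinearMap.ker f) := by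
    have hmap : (LinearMap.ker ψ).map W.subtype ≤ LinearMap.ker f := by
      rintro _ ⟨⟨x, hxW⟩, hker, rfl⟩
      exact hker
    have := (Submodule.equivMapOfInjective W.subtype (Submodule.injective_subtype W)
      (LinearMap.ker ψ)).finrank_eq
    rw [this]
    exact Submodule.finrank_mono hmap
  omega

end KerComp

section KeyLemma
variable {F : Type*} [Field F] [Fintype F] {q : ℕ} (hq1 : 1 ≤ q)
  (hadd : ∀ a b : F, (a + b) ^ q = a ^ q + b ^ q)

open Module LinearMap

set_option maxHeartbeats 2000000 in
lemma key_lemma (hq2 : 2 ≤ q) (hcard : q ≤ Nat.card (Kfix q hq1 hadd))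
    (γ1 γ2 : F) (hγ1 : γ1 ≠ 0) (hγ2 : γ2 ≠ 0)
    (hsep : ∀ w : F, w ≠ 0 → γ1 ≠ w ^ (q-1) * γ2) :
    ∀ (m : ℕ) (c : ℕ → F), c m ≠ 0 →
      finrank (Kfix q hq1 hadd) (LinearMap.ker (Llin hq1 hadd γ1 c m))
        + finrank (Kfix q hq1 hadd) (LinearMap.ker (Llin hq1 hadd γ2 c m)) ≤ m := by
  haveI : FiniteDimensional (Kfix q hq1 hadd) F := Module.Finite.of_finite
  intro m
  induction m with
  | zero =>
    intro c hc
    have hker : ∀ γ' : F, LinearMap.ker (Llin hq1 hadd γ' c 0) = ⊥ := by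
      intro γ'
      rw [LinearMap.ker_eq_bot']
      intro x hx
      rw [Llin_apply] at hx
      simp only [zero_add, Finset.sum_range_one, skewN_zero, pow_zero, pow_one, mul_one] at hx
      rcases mul_eq_zero.1 hx with h | h
      · exact absurd h hc
      · exact h
    rw [hker γ1, hker γ2, finrank_bot]
  | succ m ih =>
    intro c hc
    by_cases hbot : LinearMap.ker (Llin hq1 hadd γ1 c (m+1)) = ⊥
    · rw [hbot, finrank_bot, zero_add]
      exact finrank_ker_Llin_le hq1 hadd hq2 hcard hγ2 c (m+1) hc
    · obtain ⟨v, hvmem, hvne⟩ := Submodule.exists_mem_ne_zero_of_ne_bot hbot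
      set ρ := v ^ (q-1) * γ1 with hρ
      have hvv : v ^ (q-1) * v = v ^ q := by rw [← pow_succ, Nat.sub_add_cancel hq1]
      have hE : ∑ r ∈ Finset.range (m+2), c r * skewN q r ρ = 0 := by
        have h0 : Llin hq1 hadd γ1 c (m+1) v = 0 := hvmem
        rw [Llin_apply] at h0
        have heq : ∀ r ∈ Finset.range (m+2),
            c r * skewN q r γ1 * v ^ q ^ r = (c r * skewN q r ρ) * v := by
          intro r _
          have := skewN_conj q hq1 r v γ1
          rw [hρ]
          linear_combination (-(c r)) * this
        rw [Finset.sum_congr rfl heq, ← Finset.sum_mul] at h0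
        rcases mul_eq_zero.1 h0 with h | h
        · exact h
        · exact absurd h hvne
      have hrem := div_rem q c ρ (m+1) (by omega) hE
      set c' := divCoe q c ρ (m+1) with hc'
      have hcomp : ∀ γ' : F, Llin hq1 hadd γ' c (m+1)
          = (Llin hq1 hadd γ' c' m).comp (Tlin hq1 hadd γ' ρ) := by
        intro γ'
        apply LinearMap.ext
        intro x
        exact div_comp hq1 hadd γ' c ρ (m+1) (by omega) hrem x
      have htop : c' m = c (m+1) := by
        have h := divCoe_top q c ρ (m+1) (by omega)
        rw [Nat.add_sub_cancel] at h
        exact h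
      have hc'm : c' m ≠ 0 := by rw [htop]; exact hc
      have hIH := ih c' hc'm
      have hT1 : finrank (Kfix q hq1 hadd) (LinearMap.ker (Tlin hq1 hadd γ1 ρ)) ≤ 1 := by
        have hle : LinearMap.ker (Tlin hq1 hadd γ1 ρ) ≤ Submodule.span (Kfix q hq1 hadd) {v} := by
          intro x hx
          have hx' : γ1 * x ^ q - ρ * x = 0 := hx
          by_cases hx0 : x = 0
          · rw [hx0]; exact Submodule.zero_mem _
          · have hxq : x ^ q = v ^ (q-1) * x := by
              rw [hρ] at hx'
              have h2 : γ1 * (x ^ q - v ^ (q-1) * x) = 0 := by linear_combination hx'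
              rcases mul_eq_zero.1 h2 with h | h
              · exact absurd h hγ1
              · linear_combination h
            have hv0 : v ^ q ≠ 0 := pow_ne_zero _ hvne
            have ht : ((x * v⁻¹) ^ q) = x * v⁻¹ := by
              rw [mul_pow, hxq, inv_pow]
              field_simp
              linear_combination hvv
            rw [Submodule.mem_span_singleton]
            refine ⟨⟨x * v⁻¹, ht⟩, ?_⟩
            show (x * v⁻¹) * v = x
            field_simp
        calc finrank (Kfix q hq1 hadd) (LinearMap.ker (Tlin hq1 hadd γ1 ρ))
            ≤ finrank (Kfix q hq1 hadd) (Submodule.span (Kfix q hq1 hadd) {v}) := Submodule.finrank_mono hle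
          _ = 1 := finrank_span_singleton hvne
      have hT2 : LinearMap.ker (Tlin hq1 hadd γ2 ρ) = ⊥ := by
        rw [LinearMap.ker_eq_bot']
        intro x hx
        by_contra hx0
        have hx' : γ2 * x ^ q - ρ * x = 0 := hx
        have hxq : γ2 * x ^ (q-1) = v ^ (q-1) * γ1 := by
          have hq' : x ^ q = x ^ (q-1) * x := by
            rw [← pow_succ, Nat.sub_add_cancel hq1]
          rw [hρ, hq'] at hx'
          exact mul_right_cancel₀ hx0
            (by linear_combination hx' : γ2 * x ^ (q-1) * x = v ^ (q-1) * γ1 * x)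
        have hv1 : v ^ (q-1) ≠ 0 := pow_ne_zero _ hvne
        refine hsep (x * v⁻¹) (by simp [hx0, hvne]) ?_
        rw [mul_pow, inv_pow]
        field_simp
        linear_combination -hxq
      have hb1 : finrank (Kfix q hq1 hadd) (LinearMap.ker (Llin hq1 hadd γ1 c (m+1)))
          ≤ finrank (Kfix q hq1 hadd) (LinearMap.ker (Llin hq1 hadd γ1 c' m)) + 1 := by
        rw [hcomp γ1]
        have := finrank_ker_comp_le (K := ↥(Kfix q hq1 hadd)) (V := F) (Tlin hq1 hadd γ1 ρ) (Llin hq1 hadd γ1 c' m)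
        omega
      have hb2 : finrank (Kfix q hq1 hadd) (LinearMap.ker (Llin hq1 hadd γ2 c (m+1)))
          ≤ finrank (Kfix q hq1 hadd) (LinearMap.ker (Llin hq1 hadd γ2 c' m)) := by
        rw [hcomp γ2]
        have := finrank_ker_comp_le (K := ↥(Kfix q hq1 hadd)) (V := F) (Tlin hq1 hadd γ2 ρ) (Llin hq1 hadd γ2 c' m)
        rw [hT2, finrank_bot] at this
        omega
      omega

end KeyLemma

section Vand
open Module

lemma vand_li {K : Type*} [Field K] {ι : Type*} [DecidableEq ι] (S : Finset ι) (μ : ι → K)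
    (hinj : Set.InjOn μ S) (n : ℕ) (hn : S.card ≤ n) :
    LinearIndependent K (fun i : {x // x ∈ S} => fun j : Fin n => μ i ^ (j : ℕ)) := by
  rw [Fintype.linearIndependent_iff]
  intro g hg i₀
  have hg' : ∀ j : Fin n, ∑ i : {x // x ∈ S}, g i * μ i ^ (j : ℕ) = 0 := by
    intro j
    have := congrFun hg j
    simpa using this
  set L := Lagrange.basis S μ (i₀ : ι) with hL
  have hdeg : L.natDegree < n := by
    rw [hL, Lagrange.natDegree_basis hinj i₀.2]
    have h0 : 0 < S.card := Finset.card_pos.2 ⟨(i₀ : ι), i₀.2⟩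
    omega
  have key : ∑ i : {x // x ∈ S}, g i * Polynomial.eval (μ i) L = g i₀ := by
    rw [Finset.sum_eq_single i₀]
    · rw [hL, Lagrange.eval_basis_self hinj i₀.2, mul_one]
    · intro i _ hne
      have hne' : (i₀ : ι) ≠ (i : ι) := fun hcc => hne (Subtype.ext hcc.symm)
      rw [hL, Lagrange.eval_basis_of_ne hne' i.2, mul_zero]
    · intro hmem
      exact absurd (Finset.mem_univ i₀) hmem
  have expand : ∀ i : {x // x ∈ S},
      Polynomial.eval (μ i) L = ∑ j ∈ Finset.range n, L.coeff j * μ i ^ j :=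
    fun i => Polynomial.eval_eq_sum_range' hdeg (μ i)
  have hzero : ∑ i : {x // x ∈ S}, g i * Polynomial.eval (μ i) L = 0 := by
    calc ∑ i : {x // x ∈ S}, g i * Polynomial.eval (μ i) L
        = ∑ i : {x // x ∈ S}, ∑ j ∈ Finset.range n, L.coeff j * (g i * μ i ^ j) := by
          refine Finset.sum_congr rfl fun i _ => ?_
          rw [expand i, Finset.mul_sum]
          exact Finset.sum_congr rfl fun j _ => by ring
      _ = ∑ j ∈ Finset.range n, L.coeff j * ∑ i : {x // x ∈ S}, g i * μ i ^ j := by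
          rw [Finset.sum_comm]
          exact Finset.sum_congr rfl fun j _ => by rw [Finset.mul_sum]
      _ = 0 := by
          refine Finset.sum_eq_zero fun j hj => ?_
          have := hg' ⟨j, Finset.mem_range.1 hj⟩
          simp only at this
          rw [this, mul_zero]
  rw [key] at hzero
  exact hzero

lemma finrank_ge_card_of_li_mem {K V : Type*} [Field K] [AddCommGroup V] [Module K V]
    [FiniteDimensional K V] {ι : Type*} [Fintype ι] {f : ι → V}
    (hf : LinearIndependent K f) {W : Submodule K V} (hW : ∀ i, f i ∈ W) :
    Fintype.card ι ≤ finrank K W := by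
  have hle : Submodule.span K (Set.range f) ≤ W :=
    Submodule.span_le.2 (by rintro _ ⟨i, rfl⟩; exact hW i)
  rw [← finrank_span_eq_card hf]
  exact Submodule.finrank_mono hle

end Vand

section Expand
variable {F : Type*} [Field F] (K : Subfield F)

set_option synthInstance.maxHeartbeats 1000000 in
def expandMap (N : ℕ) (w : Fin N → F) : (Fin N → K) →ₗ[K] F where
  toFun μ := ∑ j, (μ j : F) * w j
  map_add' μ ν := by
    rw [← Finset.sum_add_distrib]
    refine Finset.sum_congr rfl fun j _ => ?_
    have : (((μ + ν) j : K) : F) = (μ j : F) + (ν j : F) := by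
      push_cast
      rfl
    rw [this]
    ring
  map_smul' t μ := by
    simp only [RingHom.id_apply]
    have hs : ∀ y : F, t • y = (t : F) * y := fun y => rfl
    rw [hs, Finset.mul_sum]
    refine Finset.sum_congr rfl fun j _ => ?_
    have : ((t • μ) j : F) = (t : F) * (μ j : F) := by
      push_cast
      rfl
    rw [this]
    ring

lemma expandMap_apply (N : ℕ) (w : Fin N → F) (μ : Fin N → K) :
    expandMap K N w μ = ∑ j, (μ j : F) * w j := rfl

end Expand

set_option maxHeartbeats 4000000 in
set_option synthInstance.maxHeartbeats 1000000 in
/-- In Construction 1 with `n > 2k`, for any `A, B ⊆ {1,…,n}` with `|A| ≤ k` and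
`|B| = 2k - |A|`, the `2k × 2k` matrix `P = [[G_0|_A, G_1|_B], [0, G_0|_B]]` is
invertible (equivalently, `G_1^c` has the MDP property). -/
theorem construction_truncated_minors_nonzero (q k n : ℕ)
    (hq : IsPrimePow q) (hq3 : 3 ≤ q) (hqn : n ≤ q) (hk : 0 < k) (h2k : 2 * k < n)
    (F : Type*) [Field F] [Fintype F] (hF : Fintype.card F = q ^ (2 * k))
    (γ : F) (hγ : orderOf γ = q ^ (2 * k) - 1)
    (lam : Fin n → F) (hlam : Function.Injective lam) (hlamq : ∀ i, (lam i) ^ q = lam i)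
    (b : Fin (2 * k) → F)
    (hbi : ∀ c : Fin (2 * k) → F, (∀ j, (c j) ^ q = c j) → ∑ j, c j * b j = 0 → ∀ j, c j = 0)
    (hbs : ∀ x : F, ∃ c : Fin (2 * k) → F, (∀ j, (c j) ^ q = c j) ∧ x = ∑ j, c j * b j)
    (A B : Finset (Fin n)) (hA : A.card ≤ k) (hB : B.card = 2 * k - A.card) :
    ∀ e : (Fin k ⊕ Fin k) ≃ ({x // x ∈ A} ⊕ {x // x ∈ B}),
      ((Matrix.fromBlocks
          ((G0mat q k n lam b).submatrix id (fun x : {x // x ∈ A} => (x : Fin n)))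
          ((G1mat q k n γ lam b).submatrix id (fun x : {x // x ∈ B} => (x : Fin n)))
          0
          ((G0mat q k n lam b).submatrix id (fun x : {x // x ∈ B} => (x : Fin n)))).submatrix
        id ⇑e).det ≠ 0 := by
  classical
  intro e
  have hq1 : 1 ≤ q := by omega
  have hq2 : 2 ≤ q := by omega
  have htk : 0 < 2 * k := by omega
  have hadd : ∀ a b : F, (a + b) ^ q = a ^ q + b ^ q := frob_add_base hq htk hF
  have hcard1 : 1 < q ^ (2*k) := Nat.one_lt_pow (by omega) (by omega)
  -- γ is nonzero
  have hγ0 : γ ≠ 0 := by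
    intro h
    have h1 := pow_orderOf_eq_one γ
    rw [hγ, h, zero_pow (by omega : q ^ (2*k) - 1 ≠ 0)] at h1
    exact zero_ne_one h1
  -- separation of the conjugacy classes of 1 and γ
  have hsep : ∀ w : F, w ≠ 0 → (1:F) ≠ w ^ (q-1) * γ := by
    intro w hw heq
    set E := ∑ t ∈ Finset.range (2*k), q ^ t with hE
    have hgeom : (q-1) * E + 1 = q ^ (2*k) := geom_aux q hq1 (2*k)
    have hE1 : 1 ≤ E := by
      rw [hE]
      calc 1 = q ^ 0 := rfl
        _ ≤ ∑ t ∈ Finset.range (2*k), q ^ t :=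
            Finset.single_le_sum (f := fun t => q ^ t) (fun t _ => Nat.zero_le _)
              (Finset.mem_range.2 (by omega))
    have hγE : γ ^ E = 1 := by
      have hw1 : w ^ (q ^ (2*k) - 1) = 1 := by
        rw [← hF]; exact FiniteField.pow_card_sub_one_eq_one w hw
      have hwne : w ^ (q-1) ≠ 0 := pow_ne_zero _ hw
      have hγw : γ = (w ^ (q-1))⁻¹ := by
        field_simp
        linear_combination -heq
      have hmul : (q-1) * E = q ^ (2*k) - 1 := by omega
      rw [hγw, ← inv_pow, ← pow_mul, hmul, inv_pow, hw1, inv_one]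
    have hdvd : orderOf γ ∣ E := orderOf_dvd_of_pow_eq_one hγE
    have hle : q ^ (2*k) - 1 ≤ E := by
      rw [← hγ]
      exact Nat.le_of_dvd (by omega) (hγ ▸ hdvd)
    have h2E : 2 * E ≤ (q-1) * E := Nat.mul_le_mul_right E (by omega)
    omega
  -- cardinality of the fixed subfield
  letI : Fintype (Kfix q hq1 hadd) := Fintype.ofFinite _
  have hcardK : q ≤ Nat.card (Kfix q hq1 hadd) := by
    have hsurj : Function.Surjective
        (fun c : Fin (2*k) → (Kfix q hq1 hadd) => ∑ j, (c j : F) * b j) := by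
      intro x
      obtain ⟨c, hcq, hx⟩ := hbs x
      exact ⟨fun j => ⟨c j, hcq j⟩, hx.symm⟩
    have hle := Fintype.card_le_of_surjective _ hsurj
    rw [Fintype.card_fun, Fintype.card_fin, hF] at hle
    rw [Nat.card_eq_fintype_card]
    exact (Nat.pow_le_pow_iff_left (by omega : 2*k ≠ 0)).1 hle
  haveI : FiniteDimensional (Kfix q hq1 hadd) F := Module.Finite.of_finite
  -- λ's as elements of the subfield
  set lamK : Fin n → (Kfix q hq1 hadd) := fun i => ⟨lam i, hlamq i⟩ with hlamKdef
  have hlamKinj : Function.Injective lamK := fun i j hij => hlam (congrArg Subtype.val hij)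
  -- expansion maps
  have hkk : k ≤ 2*k := by omega
  set eb := expandMap (Kfix q hq1 hadd) (2*k) b with hebdef
  set ebk := expandMap (Kfix q hq1 hadd) k (fun j : Fin k => b (Fin.castLE hkk j)) with hebkdef
  have hkereb : LinearMap.ker eb = ⊥ := by
    rw [LinearMap.ker_eq_bot']
    intro μ hμ
    have h1 : ∑ j, ((μ j : F)) * b j = 0 := hμ
    have h2 := hbi (fun j => (μ j : F)) (fun j => (μ j).2) h1
    funext j
    exact Subtype.ext (h2 j)
  have hkerebk : LinearMap.ker ebk = ⊥ := by
    rw [LinearMap.ker_eq_bot']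
    intro μ hμ
    have h1 : ∑ j : Fin k, ((μ j : F)) * b (Fin.castLE hkk j) = 0 := hμ
    set ν : Fin (2*k) → F := fun j => if h : (j : ℕ) < k then (μ ⟨j, h⟩ : F) else 0 with hνdef
    have hν1 : ∑ j, ν j * b j = 0 := by
      have hsum : ∑ j : Fin (2*k), ν j * b j
          = ∑ x ∈ Finset.range (2*k), (fun x : ℕ =>
              if h : x < k then (μ ⟨x, h⟩ : F) * b ⟨x, by omega⟩ else 0) x := by
        rw [← Fin.sum_univ_eq_sum_range]
        refine Finset.sum_congr rfl fun j _ => ?_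
        rw [hνdef]
        by_cases hj : (j : ℕ) < k
        · simp only [hj, dif_pos]
        · simp only [hj, dif_neg, not_false_iff, zero_mul]
      rw [hsum, ← Finset.sum_subset (Finset.range_subset_range.2 hkk)
        (fun x _ hx => dif_neg (by simp at hx; omega))]
      rw [← h1, ← Fin.sum_univ_eq_sum_range]
      refine Finset.sum_congr rfl fun j _ => ?_
      simp only [j.2, dif_pos]
      rfl
    have hν2 : ∀ j, ν j = 0 := hbi ν (fun j => by
      rw [hνdef]
      by_cases hj : (j : ℕ) < k
      · simp only [hj, dif_pos]
        exact (μ ⟨(j:ℕ), hj⟩).2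
      · simp only [hj, dif_neg, not_false_iff]
        exact zero_pow (by omega)) hν1
    funext j
    have := hν2 (Fin.castLE hkk j)
    rw [hνdef] at this
    simp only [Fin.coe_castLE, j.2, dif_pos] at this
    exact Subtype.ext (by simpa using this)
  -- projection to the first k coordinates
  set π := LinearMap.funLeft (Kfix q hq1 hadd) (Kfix q hq1 hadd) (Fin.castLE hkk) with hπdef
  -- entry computations
  have hG0e : ∀ (x : F) (r : ℕ), skewN q r (x ^ (q-1)) * x = x ^ q ^ r := by
    intro x r
    have h := skewN_conj q hq1 r x 1
    rw [mul_one] at h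
    rw [h, skewN_one, one_mul]
  -- from the vanishing determinant, get a kernel vector
  by_contra hdet
  obtain ⟨w, hw0, hwM⟩ := Matrix.exists_vecMul_eq_zero_iff.2 hdet
  set c : ℕ → F := fun r => if h : r < k then w (Sum.inl ⟨r, h⟩) else 0 with hcdef
  set d : ℕ → F := fun r => if h : r < k then w (Sum.inr ⟨r, h⟩) else 0 with hddef
  have cond1 : ∀ i ∈ A, ∑ r ∈ Finset.range k, c r * (alph k (lam i) b) ^ q ^ r = 0 := by
    intro i hi
    have h1 := congrFun hwM (e.symm (Sum.inl ⟨i, hi⟩))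
    simp only [Matrix.vecMul, dotProduct, Matrix.submatrix_apply, id_eq,
      Equiv.apply_symm_apply, Pi.zero_apply, Fintype.sum_sum_type,
      Matrix.fromBlocks_apply₁₁, Matrix.fromBlocks_apply₂₁, Matrix.zero_apply,
      mul_zero, Finset.sum_const_zero, add_zero] at h1
    rw [← h1, ← Fin.sum_univ_eq_sum_range (fun r => c r * (alph k (lam i) b) ^ q ^ r) k]
    refine Finset.sum_congr rfl fun r _ => ?_
    rw [hcdef]
    simp only [r.2, dif_pos, Fin.eta]
    simp only [G0mat, Matrix.of_apply, hG0e]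
  have cond2 : ∀ i ∈ B,
      (∑ r ∈ Finset.range k, c r * skewN q r γ * (bet k (lam i) b) ^ q ^ r)
      + (∑ r ∈ Finset.range k, d r * (alph k (lam i) b) ^ q ^ r) = 0 := by
    intro i hi
    have h1 := congrFun hwM (e.symm (Sum.inr ⟨i, hi⟩))
    simp only [Matrix.vecMul, dotProduct, Matrix.submatrix_apply, id_eq,
      Equiv.apply_symm_apply, Pi.zero_apply, Fintype.sum_sum_type,
      Matrix.fromBlocks_apply₁₂, Matrix.fromBlocks_apply₂₂] at h1
    rw [← h1]
    congr 1
    · rw [← Fin.sum_univ_eq_sum_range (fun r => c r * skewN q r γ * (bet k (lam i) b) ^ q ^ r) k]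
      refine Finset.sum_congr rfl fun r _ => ?_
      rw [hcdef]
      simp only [r.2, dif_pos, Fin.eta]
      simp only [G1mat, Matrix.of_apply]
      rw [skewN_conj q hq1]
      ring
    · rw [← Fin.sum_univ_eq_sum_range (fun r => d r * (alph k (lam i) b) ^ q ^ r) k]
      refine Finset.sum_congr rfl fun r _ => ?_
      rw [hddef]
      simp only [r.2, dif_pos, Fin.eta]
      simp only [G0mat, Matrix.of_apply, hG0e]
  -- sum extension helper
  have hsum_ext : ∀ (m : ℕ) (cc : ℕ → F) (γ' x : F), m + 1 ≤ k → (∀ r, m < r → cc r = 0) →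
      Llin hq1 hadd γ' cc m x = ∑ r ∈ Finset.range k, cc r * skewN q r γ' * x ^ q ^ r := by
    intro m cc γ' x hmk hcc
    rw [Llin_apply]
    refine Finset.sum_subset (Finset.range_subset_range.2 hmk) fun r _ hnr => ?_
    rw [hcc r (by simp only [Finset.mem_range, not_lt] at hnr; omega), zero_mul, zero_mul]
  -- the alph vectors as images of Vandermonde vectors
  have halph : ∀ i : Fin n, ebk (fun j : Fin k => lamK i ^ (j:ℕ)) = alph k (lam i) b := by
    intro i
    rw [expandMap_apply, alph]
    refine Finset.sum_congr rfl fun j _ => ?_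
    congr 1
  have hbet : ∀ i : Fin n, eb (fun j : Fin (2*k) => lamK i ^ (j:ℕ)) = bet k (lam i) b := by
    intro i
    rw [expandMap_apply, bet]
    refine Finset.sum_congr rfl fun j _ => ?_
    congr 1
  -- case analysis on whether c vanishes
  by_cases hc0 : ∀ r, c r = 0
  · -- case 1: c ≡ 0, so d ≠ 0
    have hdex : ∃ r, r ≤ k - 1 ∧ d r ≠ 0 := by
      obtain ⟨i0, hi0⟩ := Function.ne_iff.1 hw0
      cases i0 with
      | inl r =>
        exfalso
        apply hi0
        have := hc0 (r : ℕ)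
        rw [hcdef] at this
        simpa only [r.2, dif_pos, Fin.eta, Pi.zero_apply] using this
      | inr r =>
        refine ⟨(r : ℕ), by omega, ?_⟩
        rw [hddef]
        simpa only [r.2, dif_pos, Fin.eta, Pi.zero_apply] using hi0
    set m' := Nat.findGreatest (fun r => d r ≠ 0) (k-1) with hm'def
    obtain ⟨r0, hr0k, hr0⟩ := hdex
    have hdm' : d m' ≠ 0 := Nat.findGreatest_spec (P := fun r => d r ≠ 0) hr0k hr0
    have hm'k : m' ≤ k - 1 := Nat.findGreatest_le _
    have hdz : ∀ r, m' < r → d r = 0 := by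
      intro r hr
      by_cases hrk : r ≤ k - 1
      · by_contra hne
        exact (Nat.findGreatest_is_greatest (P := fun r => d r ≠ 0) hr hrk) hne
      · rw [hddef]
        exact dif_neg (by omega)
    have hgk : ∀ i ∈ B, Llin hq1 hadd 1 d m' (alph k (lam i) b) = 0 := by
      intro i hi
      rw [hsum_ext m' d 1 _ (by omega) hdz]
      have h2 := cond2 i hi
      have hz : ∑ r ∈ Finset.range k, c r * skewN q r γ * (bet k (lam i) b) ^ q ^ r = 0 :=
        Finset.sum_eq_zero fun r _ => by rw [hc0 r, zero_mul, zero_mul]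
      rw [hz, zero_add] at h2
      rw [← h2]
      refine Finset.sum_congr rfl fun r _ => ?_
      rw [skewN_one, mul_one]
    have hBcard : k ≤ B.card := by omega
    obtain ⟨B', hB'sub, hB'card⟩ := Finset.exists_subset_card_eq hBcard
    have hinjOn : Set.InjOn lamK B' := fun x _ y _ hxy => hlamKinj hxy
    have hli0 := vand_li B' lamK hinjOn k (by rw [hB'card])
    have hli := hli0.map' ebk hkerebk
    have hmem : ∀ i : {x // x ∈ B'},
        (ebk ∘ fun i : {x // x ∈ B'} => fun j : Fin k => lamK i ^ (j:ℕ)) i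
          ∈ LinearMap.ker (Llin hq1 hadd 1 d m') := by
      intro i
      simp only [Function.comp_apply, LinearMap.mem_ker, halph]
      exact hgk (i : Fin n) (hB'sub i.2)
    have hge := finrank_ge_card_of_li_mem hli hmem
    rw [Fintype.card_coe, hB'card] at hge
    have hle := finrank_ker_Llin_le hq1 hadd hq2 hcardK one_ne_zero d m' hdm'
    omega
  · -- case 2: c ≠ 0
    push_neg at hc0
    obtain ⟨r0, hr0⟩ := hc0
    have hr0k : r0 ≤ k - 1 := by
      by_contra hcon
      apply hr0
      rw [hcdef]
      exact dif_neg (by omega)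
    set m := Nat.findGreatest (fun r => c r ≠ 0) (k-1) with hmdef
    have hcm : c m ≠ 0 := Nat.findGreatest_spec (P := fun r => c r ≠ 0) hr0k hr0
    have hmk : m ≤ k - 1 := Nat.findGreatest_le _
    have hcz : ∀ r, m < r → c r = 0 := by
      intro r hr
      by_cases hrk : r ≤ k - 1
      · by_contra hne
        exact (Nat.findGreatest_is_greatest (P := fun r => c r ≠ 0) hr hrk) hne
      · rw [hcdef]
        exact dif_neg (by omega)
    have hdz' : ∀ r, k - 1 < r → d r = 0 := by
      intro r hr
      rw [hddef]
      exact dif_neg (by omega)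
    -- condition on A: f kills the alph's
    have hfα : ∀ i ∈ A, Llin hq1 hadd 1 c m (alph k (lam i) b) = 0 := by
      intro i hi
      rw [hsum_ext m c 1 _ (by omega) hcz]
      have h1 := cond1 i hi
      rw [← h1]
      refine Finset.sum_congr rfl fun r _ => ?_
      rw [skewN_one, mul_one]
    -- condition on B
    have hΘpt : ∀ i ∈ B, Llin hq1 hadd γ c m (bet k (lam i) b)
        + Llin hq1 hadd 1 d (k-1) (alph k (lam i) b) = 0 := by
      intro i hi
      rw [hsum_ext m c γ _ (by omega) hcz, hsum_ext (k-1) d 1 _ (by omega) hdz']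
      have h2 := cond2 i hi
      rw [← h2]
      congr 1
      refine Finset.sum_congr rfl fun r _ => ?_
      rw [skewN_one, mul_one]
    -- the combined linear map Θ
    set Θ := ((Llin hq1 hadd γ c m).comp eb)
      + (((Llin hq1 hadd 1 d (k-1)).comp ebk).comp π) with hΘdef
    have hθv : ∀ i ∈ B, Θ (fun j : Fin (2*k) => lamK i ^ (j:ℕ)) = 0 := by
      intro i hi
      have hπv : π (fun j : Fin (2*k) => lamK i ^ (j:ℕ)) = fun j : Fin k => lamK i ^ (j:ℕ) := by
        funext j
        simp [hπdef, LinearMap.funLeft_apply]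
      rw [hΘdef]
      simp only [LinearMap.add_apply, LinearMap.comp_apply]
      rw [hπv, halph, hbet]
      exact hΘpt i hi
    -- rank bounds
    have n1 : A.card ≤ Module.finrank (Kfix q hq1 hadd)
        (LinearMap.ker (Llin hq1 hadd 1 c m)) := by
      have hinjOn : Set.InjOn lamK A := fun x _ y _ hxy => hlamKinj hxy
      have hli0 := vand_li A lamK hinjOn k hA
      have hli := hli0.map' ebk hkerebk
      have hmem : ∀ i : {x // x ∈ A},
          (ebk ∘ fun i : {x // x ∈ A} => fun j : Fin k => lamK i ^ (j:ℕ)) i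
            ∈ LinearMap.ker (Llin hq1 hadd 1 c m) := by
        intro i
        simp only [Function.comp_apply, LinearMap.mem_ker, halph]
        exact hfα (i : Fin n) i.2
      have hge := finrank_ge_card_of_li_mem hli hmem
      rwa [Fintype.card_coe] at hge
    have n2 : 2*k - A.card ≤ Module.finrank (Kfix q hq1 hadd) (LinearMap.ker Θ) := by
      have hinjOn : Set.InjOn lamK B := fun x _ y _ hxy => hlamKinj hxy
      have hli0 := vand_li B lamK hinjOn (2*k) (by omega)
      have hmem : ∀ i : {x // x ∈ B},
          (fun i : {x // x ∈ B} => fun j : Fin (2*k) => lamK i ^ (j:ℕ)) i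
            ∈ LinearMap.ker Θ := by
        intro i
        simp only [LinearMap.mem_ker]
        exact hθv (i : Fin n) i.2
      have hge := finrank_ge_card_of_li_mem hli0 hmem
      rw [Fintype.card_coe, hB] at hge
      exact hge
    have hfrtot : Module.finrank (Kfix q hq1 hadd) (Fin (2*k) → (Kfix q hq1 hadd)) = 2*k := by
      rw [Module.finrank_fintype_fun_eq_card, Fintype.card_fin]
    have hZ : Module.finrank (Kfix q hq1 hadd) (LinearMap.ker π) = k := by
      have hsurj : Function.Surjective π :=
        LinearMap.funLeft_surjective_of_injective _ _ _ (Fin.castLE_injective hkk)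
      have hrn := LinearMap.finrank_range_add_finrank_ker π
      rw [LinearMap.range_eq_top.2 hsurj, finrank_top] at hrn
      have hfr1 : Module.finrank (Kfix q hq1 hadd) (Fin k → (Kfix q hq1 hadd)) = k := by
        rw [Module.finrank_fintype_fun_eq_card, Fintype.card_fin]
      omega
    have hinf : k - A.card ≤ Module.finrank (Kfix q hq1 hadd)
        ((LinearMap.ker Θ) ⊓ (LinearMap.ker π) : Submodule (Kfix q hq1 hadd) _) := by
      have hsupinf := Submodule.finrank_sup_add_finrank_inf_eq
        (LinearMap.ker Θ) (LinearMap.ker π)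
      have hsuple := Submodule.finrank_le
        ((LinearMap.ker Θ) ⊔ (LinearMap.ker π) : Submodule (Kfix q hq1 hadd) _)
      omega
    have n3 : k - A.card ≤ Module.finrank (Kfix q hq1 hadd)
        (LinearMap.ker (Llin hq1 hadd γ c m)) := by
      have hmaple : Submodule.map eb ((LinearMap.ker Θ) ⊓ (LinearMap.ker π))
          ≤ LinearMap.ker (Llin hq1 hadd γ c m) := by
        rintro _ ⟨μ, ⟨hμΘ, hμπ⟩, rfl⟩
        rw [LinearMap.mem_ker]
        have h1 : Θ μ = 0 := hμΘ
        have h2 : π μ = 0 := hμπ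
        rw [hΘdef] at h1
        simp only [LinearMap.add_apply, LinearMap.comp_apply] at h1
        rw [h2, map_zero, map_zero, add_zero] at h1
        exact h1
      have hfeq := (Submodule.equivMapOfInjective eb (LinearMap.ker_eq_bot.1 hkereb)
        ((LinearMap.ker Θ) ⊓ (LinearMap.ker π))).finrank_eq
      calc k - A.card
          ≤ Module.finrank (Kfix q hq1 hadd)
            ((LinearMap.ker Θ) ⊓ (LinearMap.ker π) : Submodule (Kfix q hq1 hadd) _) := hinf
        _ = Module.finrank (Kfix q hq1 hadd)
            (Submodule.map eb ((LinearMap.ker Θ) ⊓ (LinearMap.ker π))) := hfeq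
        _ ≤ Module.finrank (Kfix q hq1 hadd)
            (LinearMap.ker (Llin hq1 hadd γ c m)) := Submodule.finrank_mono hmaple
    have hkey := key_lemma hq1 hadd hq2 hcardK 1 γ one_ne_zero hγ0 hsep m c hcm
    omega
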